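/- Subadditivity of the trace square root: for positive semidefinite symmetric n×n matrices A and B, tr(√(A + B)) ≤ tr(√A) + tr(√B). -/

import Mathlib

open Matrix
open scoped Classical

/-- The positive semidefinite square root of a matrix (zero if not PSD). -/
noncomputable def sqrtM {n : ℕ} (A : Matrix (Fin n) (Fin n) ℝ) : Matrix (Fin n) (Fin n) ℝ :=
  if h : A.PosSemidef then
    h.1.eigenvectorUnitary.1 * diagonal ((RCLike.ofReal : ℝ → ℝ) ∘ (√·) ∘ h.1.eigenvalues) *
      (star h.1.eigenvectorUnitary : Matrix (Fin n) (Fin n) ℝ)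
  else 0

/-- Euclidean norm of a vector. -/
noncomputable def euclNorm {n : ℕ} (v : Fin n → ℝ) : ℝ := Real.sqrt (v ⬝ᵥ v)

/-- The ℓ₂ operator (spectral) norm of a matrix. -/
noncomputable def opNorm {n : ℕ} (A : Matrix (Fin n) (Fin n) ℝ) : ℝ :=
  ⨆ u : {u : Fin n → ℝ // euclNorm u ≤ 1}, euclNorm (A *ᵥ u)

/-- The explicit PSD square root (replacement for the removed `Matrix.PosSemidef.sqrt`). -/
noncomputable def Matrix.PosSemidef.sqrt {n : ℕ} {A : Matrix (Fin n) (Fin n) ℝ}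
    (h : A.PosSemidef) : Matrix (Fin n) (Fin n) ℝ :=
  h.1.eigenvectorUnitary.1 * diagonal ((RCLike.ofReal : ℝ → ℝ) ∘ (√·) ∘ h.1.eigenvalues) *
    (star h.1.eigenvectorUnitary : Matrix (Fin n) (Fin n) ℝ)

open scoped MatrixOrder in
lemma Matrix.PosSemidef.sqrt_eq_cfc {n : ℕ} {A : Matrix (Fin n) (Fin n) ℝ}
    (h : A.PosSemidef) : h.sqrt = CFC.sqrt A := by
  rw [CFC.sqrt_eq_cfc, cfc_nnreal_eq_real _ A, h.1.cfc_eq]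
  simp only [IsHermitian.cfc, Matrix.PosSemidef.sqrt, Real.coe_sqrt, Real.coe_toNNReal',
    Unitary.conjStarAlgAut_apply]
  congr 3
  funext i
  simp [max_eq_left (h.eigenvalues_nonneg i)]

open scoped MatrixOrder in
lemma Matrix.PosSemidef.posSemidef_sqrt {n : ℕ} {A : Matrix (Fin n) (Fin n) ℝ}
    (h : A.PosSemidef) : h.sqrt.PosSemidef := by
  rw [h.sqrt_eq_cfc]
  exact Matrix.nonneg_iff_posSemidef.mp (CFC.sqrt_nonneg A)

open scoped MatrixOrder in
lemma Matrix.PosSemidef.sqrt_mul_self {n : ℕ} {A : Matrix (Fin n) (Fin n) ℝ}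
    (h : A.PosSemidef) : h.sqrt * h.sqrt = A := by
  rw [h.sqrt_eq_cfc]
  exact CFC.sqrt_mul_sqrt_self A (Matrix.nonneg_iff_posSemidef.mpr h)

open scoped MatrixOrder in
lemma Matrix.PosSemidef.eq_sqrt_of_sq_eq {n : ℕ} {C N : Matrix (Fin n) (Fin n) ℝ}
    (hC : C.PosSemidef) (hN : N.PosSemidef) (hCN : C ^ 2 = N) : C = hN.sqrt := by
  rw [hN.sqrt_eq_cfc, eq_comm, CFC.sqrt_eq_iff _ _ (Matrix.nonneg_iff_posSemidef.mpr hN)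
    (Matrix.nonneg_iff_posSemidef.mpr hC), ← hCN, pow_two]

section helpers
variable {n : ℕ}

lemma myPsdTraceNonneg {M : Matrix (Fin n) (Fin n) ℝ} (hM : M.PosSemidef) : 0 ≤ M.trace := by
  refine Finset.sum_nonneg fun i _ => ?_
  have := hM.2 (Finsupp.single i 1)
  simpa using this
lemma myTraceMulNonneg {C D : Matrix (Fin n) (Fin n) ℝ} (hC : C.PosSemidef) (hD : D.PosSemidef) :
    0 ≤ (C * D).trace := by
  have h2 : (C * D).trace = (hC.sqrt * D * hC.sqrt).trace := by
    conv_lhs => rw [← hC.sqrt_mul_self]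
    rw [Matrix.mul_assoc, Matrix.trace_mul_comm, Matrix.mul_assoc]
  rw [h2]
  have := hD.mul_mul_conjTranspose_same hC.sqrt
  rw [hC.posSemidef_sqrt.1] at this
  exact myPsdTraceNonneg this

variable {n : ℕ}

lemma myPosDefSqrt {A : Matrix (Fin n) (Fin n) ℝ} (hA : A.PosDef) :
    (hA.posSemidef).sqrt.PosDef := by
  refine Matrix.PosDef.of_dotProduct_mulVec_pos hA.posSemidef.posSemidef_sqrt.1 fun x hx => ?_
  rcases (hA.posSemidef.posSemidef_sqrt.dotProduct_mulVec_nonneg x).lt_or_eq with h | h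
  · exact h
  · exfalso
    have h0 : hA.posSemidef.sqrt *ᵥ x = 0 :=
      (hA.posSemidef.posSemidef_sqrt.dotProduct_mulVec_zero_iff x).mp h.symm
    have hAx : A *ᵥ x = 0 := by
      conv_lhs => rw [← hA.posSemidef.sqrt_mul_self]
      rw [← mulVec_mulVec, h0, mulVec_zero]
    have := hA.dotProduct_mulVec_pos hx
    rw [hAx, dotProduct_zero] at this
    exact lt_irrefl _ this

lemma myTraceInvMulSqLe {P Q : Matrix (Fin n) (Fin n) ℝ} (hP : P.PosSemidef) (hQ : Q.PosSemidef)
    (hT : (P + Q).PosDef) : ((P + Q)⁻¹ * (P * P)).trace ≤ P.trace := by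
  set T := P + Q with hTdef
  obtain ⟨R, hRpsd, hRpd, hRR⟩ :
      ∃ R : Matrix (Fin n) (Fin n) ℝ, R.PosSemidef ∧ R.PosDef ∧ R * R = T :=
    ⟨hT.posSemidef.sqrt, hT.posSemidef.posSemidef_sqrt, myPosDefSqrt hT,
      hT.posSemidef.sqrt_mul_self⟩
  have hRdet : IsUnit R.det := (Matrix.isUnit_iff_isUnit_det R).mp hRpd.isUnit
  have hRsym : Rᴴ = R := hRpsd.1
  have hRiH : (R⁻¹)ᴴ = R⁻¹ := by rw [Matrix.conjTranspose_nonsing_inv, hRsym]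
  have hiR : R⁻¹ * R = 1 := Matrix.nonsing_inv_mul R hRdet
  have hRi : R * R⁻¹ = 1 := Matrix.mul_nonsing_inv R hRdet
  set W := R⁻¹ * P * R⁻¹ with hW
  have hWpsd : W.PosSemidef := by
    have := hP.mul_mul_conjTranspose_same R⁻¹
    rwa [hRiH] at this
  have hPW : P = R * W * R := by
    rw [hW]
    calc P = (R * R⁻¹) * P * (R⁻¹ * R) := by rw [hRi, hiR, Matrix.one_mul, Matrix.mul_one]
    _ = R * (R⁻¹ * P * R⁻¹) * R := by simp only [Matrix.mul_assoc]
  have hWc : (1 - W).PosSemidef := by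
    have h2 : (1 : Matrix (Fin n) (Fin n) ℝ) - W = R⁻¹ * Q * R⁻¹ := by
      have h3 : R⁻¹ * T * R⁻¹ = 1 := by
        rw [← hRR]
        calc R⁻¹ * (R * R) * R⁻¹ = (R⁻¹ * R) * (R * R⁻¹) := by simp only [Matrix.mul_assoc]
        _ = 1 := by rw [hiR, hRi, Matrix.one_mul]
      rw [← h3, hTdef, hW]
      rw [Matrix.mul_add, Matrix.add_mul]
      abel
    rw [h2]
    have := hQ.mul_mul_conjTranspose_same R⁻¹
    rwa [hRiH] at this
  have hTinv : T⁻¹ = R⁻¹ * R⁻¹ := by rw [← hRR, Matrix.mul_inv_rev]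
  have e1 : (T⁻¹ * (P * P)).trace = (W * W * (R * R)).trace := by
    rw [hTinv]
    conv_lhs => rw [hPW]
    have h4 : R⁻¹ * R⁻¹ * (R * W * R * (R * W * R)) = R⁻¹ * (W * (R * R) * W * R) := by
      calc R⁻¹ * R⁻¹ * (R * W * R * (R * W * R))
          = R⁻¹ * ((R⁻¹ * R) * (W * (R * R) * (W * R))) := by simp only [Matrix.mul_assoc]
        _ = R⁻¹ * (W * (R * R) * W * R) := by
            rw [hiR, Matrix.one_mul]; simp only [Matrix.mul_assoc]
    rw [h4, Matrix.trace_mul_comm]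
    calc (W * (R * R) * W * R * R⁻¹).trace = (W * (R * R) * W * (R * R⁻¹)).trace := by
          simp only [Matrix.mul_assoc]
      _ = (W * (R * R) * W).trace := by rw [hRi, Matrix.mul_one]
      _ = (W * W * (R * R)).trace := by rw [Matrix.trace_mul_cycle]
  have e2 : P.trace = (W * (R * R)).trace := by
    conv_lhs => rw [hPW]
    rw [Matrix.trace_mul_cycle, Matrix.trace_mul_comm]
  rw [e1, e2]
  have key : 0 ≤ ((W - W * W) * (R * R)).trace := by
    apply myTraceMulNonneg _ (hRR ▸ hT.posSemidef)
    obtain ⟨S, hSpsd, hWs⟩ :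
        ∃ S : Matrix (Fin n) (Fin n) ℝ, S.PosSemidef ∧ S * S = W :=
      ⟨hWpsd.sqrt, hWpsd.posSemidef_sqrt, hWpsd.sqrt_mul_self⟩
    have hSym : Sᴴ = S := hSpsd.1
    have h5 : W - W * W = S * (1 - W) * S := by
      rw [Matrix.mul_sub, Matrix.sub_mul, Matrix.mul_one, hWs]
      congr 1
      symm
      calc S * W * S = S * (S * S) * S := by rw [hWs]
        _ = (S * S) * (S * S) := by simp only [Matrix.mul_assoc]
        _ = W * W := by rw [hWs]
    rw [h5]
    have := hWc.mul_mul_conjTranspose_same S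
    rwa [hSym] at this
  have h6 : ((W - W * W) * (R * R)).trace
      = (W * (R * R)).trace - (W * W * (R * R)).trace := by
    rw [Matrix.sub_mul, Matrix.trace_sub]
  linarith
lemma myCore {A B : Matrix (Fin n) (Fin n) ℝ} (hA : A.PosDef) (hB : B.PosDef)
    (hAB : (A + B).PosSemidef) :
    hAB.sqrt.trace ≤ hA.posSemidef.sqrt.trace + hB.posSemidef.sqrt.trace := by
  obtain ⟨S, hSpsd, hSS, hStr⟩ :
      ∃ S : Matrix (Fin n) (Fin n) ℝ, S.PosSemidef ∧ S * S = A + B ∧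
        S.trace = hAB.sqrt.trace :=
    ⟨hAB.sqrt, hAB.posSemidef_sqrt, hAB.sqrt_mul_self, rfl⟩
  obtain ⟨P, hPpsd, hPpd, hPP, hPtr⟩ :
      ∃ P : Matrix (Fin n) (Fin n) ℝ, P.PosSemidef ∧ P.PosDef ∧ P * P = A ∧
        P.trace = hA.posSemidef.sqrt.trace :=
    ⟨hA.posSemidef.sqrt, hA.posSemidef.posSemidef_sqrt, myPosDefSqrt hA,
      hA.posSemidef.sqrt_mul_self, rfl⟩
  obtain ⟨Q, hQpsd, hQpd, hQQ, hQtr⟩ :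
      ∃ Q : Matrix (Fin n) (Fin n) ℝ, Q.PosSemidef ∧ Q.PosDef ∧ Q * Q = B ∧
        Q.trace = hB.posSemidef.sqrt.trace :=
    ⟨hB.posSemidef.sqrt, hB.posSemidef.posSemidef_sqrt, myPosDefSqrt hB,
      hB.posSemidef.sqrt_mul_self, rfl⟩
  rw [← hStr, ← hPtr, ← hQtr]
  set T := P + Q with hTdef
  have hTpd : T.PosDef := hPpd.add hQpd
  obtain ⟨R, hRpsd, hRpd, hRR⟩ :
      ∃ R : Matrix (Fin n) (Fin n) ℝ, R.PosSemidef ∧ R.PosDef ∧ R * R = T :=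
    ⟨hTpd.posSemidef.sqrt, hTpd.posSemidef.posSemidef_sqrt, myPosDefSqrt hTpd,
      hTpd.posSemidef.sqrt_mul_self⟩
  have hRdet : IsUnit R.det := (Matrix.isUnit_iff_isUnit_det R).mp hRpd.isUnit
  have hRsym : Rᴴ = R := hRpsd.1
  have hRiH : (R⁻¹)ᴴ = R⁻¹ := by rw [Matrix.conjTranspose_nonsing_inv, hRsym]
  have hiR : R⁻¹ * R = 1 := Matrix.nonsing_inv_mul R hRdet
  have hRi : R * R⁻¹ = 1 := Matrix.mul_nonsing_inv R hRdet
  have hTinv : T⁻¹ = R⁻¹ * R⁻¹ := by rw [← hRR, Matrix.mul_inv_rev]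
  set X := R⁻¹ * S with hX
  have hXH : Xᴴ = S * R⁻¹ := by rw [hX, Matrix.conjTranspose_mul, hSpsd.1, hRiH]
  have h0 : 0 ≤ ((X - R)ᴴ * (X - R)).trace :=
    myPsdTraceNonneg (posSemidef_conjTranspose_mul_self _)
  have expand : ((X - R)ᴴ * (X - R)).trace =
      (Xᴴ * X).trace - (Xᴴ * R).trace - (Rᴴ * X).trace + (Rᴴ * R).trace := by
    rw [Matrix.conjTranspose_sub, Matrix.sub_mul, Matrix.mul_sub, Matrix.mul_sub,
      Matrix.trace_sub, Matrix.trace_sub, Matrix.trace_sub]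
    ring
  have t1 : (Xᴴ * R).trace = S.trace := by
    rw [hXH, Matrix.mul_assoc, hiR, Matrix.mul_one]
  have t2 : (Rᴴ * X).trace = S.trace := by
    rw [hRsym, hX, Matrix.mul_nonsing_inv_cancel_left _ _ hRdet]
  have t3 : (Rᴴ * R).trace = T.trace := by rw [hRsym, hRR]
  have t4 : (Xᴴ * X).trace = (T⁻¹ * (A + B)).trace := by
    calc (Xᴴ * X).trace = ((S * R⁻¹) * (R⁻¹ * S)).trace := by rw [hXH, hX]
      _ = ((R⁻¹ * S) * (S * R⁻¹)).trace := Matrix.trace_mul_comm _ _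
      _ = ((R⁻¹ * (S * S)) * R⁻¹).trace := by simp only [Matrix.mul_assoc]
      _ = (R⁻¹ * (R⁻¹ * (S * S))).trace := by
          rw [Matrix.trace_mul_comm]
      _ = (T⁻¹ * (A + B)).trace := by rw [hTinv, hSS]; simp only [Matrix.mul_assoc]
  have L1 : 2 * S.trace ≤ (T⁻¹ * (A + B)).trace + T.trace := by
    rw [expand, t1, t2, t3, t4] at h0
    linarith
  have l2a : (T⁻¹ * (P * P)).trace ≤ P.trace := myTraceInvMulSqLe hPpsd hQpsd hTpd
  have l2b : (T⁻¹ * (Q * Q)).trace ≤ Q.trace := by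
    have hTpd' : (Q + P).PosDef := by rw [add_comm]; exact hTpd
    have h := myTraceInvMulSqLe hQpsd hPpsd hTpd'
    rwa [add_comm Q P] at h
  have split : (T⁻¹ * (A + B)).trace = (T⁻¹ * (P * P)).trace + (T⁻¹ * (Q * Q)).trace := by
    rw [← hPP, ← hQQ, Matrix.mul_add, Matrix.trace_add]
  have hTtr : T.trace = P.trace + Q.trace := Matrix.trace_add P Q
  linarith

lemma mySqrtAddLe {a b : ℝ} (ha : 0 ≤ a) (hb : 0 ≤ b) :
    Real.sqrt (a + b) ≤ Real.sqrt a + Real.sqrt b := by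
  have h1 : a + b ≤ (Real.sqrt a + Real.sqrt b) ^ 2 := by
    nlinarith [Real.sq_sqrt ha, Real.sq_sqrt hb, Real.sqrt_nonneg a, Real.sqrt_nonneg b,
      mul_nonneg (Real.sqrt_nonneg a) (Real.sqrt_nonneg b)]
  calc Real.sqrt (a + b) ≤ Real.sqrt ((Real.sqrt a + Real.sqrt b) ^ 2) := Real.sqrt_le_sqrt h1
    _ = Real.sqrt a + Real.sqrt b := Real.sqrt_sq (by positivity)

lemma myTraceSqrtEq {M N : Matrix (Fin n) (Fin n) ℝ} (hM : M.PosSemidef) (hN : N.PosSemidef)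
    (ε : ℝ) (hε : 0 ≤ ε) (hMN : N = M + ε • 1) :
    hN.sqrt.trace = ∑ i, Real.sqrt (hM.1.eigenvalues i + ε) := by
  set V : Matrix (Fin n) (Fin n) ℝ := (hM.1.eigenvectorUnitary : Matrix (Fin n) (Fin n) ℝ) with hV
  have hV1 : V * star V = 1 := (Matrix.mem_unitaryGroup_iff).mp hM.1.eigenvectorUnitary.2
  have hV2 : star V * V = 1 := (Matrix.mem_unitaryGroup_iff').mp hM.1.eigenvectorUnitary.2
  set d : Fin n → ℝ := fun i => hM.1.eigenvalues i + ε with hd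
  have hdnn : ∀ i, 0 ≤ d i := fun i => add_nonneg (hM.eigenvalues_nonneg i) hε
  set C : Matrix (Fin n) (Fin n) ℝ := V * diagonal (fun i => Real.sqrt (d i)) * star V with hC
  have hCpsd : C.PosSemidef := by
    rw [hC, Matrix.star_eq_conjTranspose]
    exact (posSemidef_diagonal_iff.mpr fun i => Real.sqrt_nonneg _).mul_mul_conjTranspose_same V
  have hDD : diagonal (fun i => Real.sqrt (d i)) * diagonal (fun i => Real.sqrt (d i))
      = diagonal d := by
    rw [diagonal_mul_diagonal]
    exact congrArg _ (funext fun i => Real.mul_self_sqrt (hdnn i))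
  have hC2 : C * C = N := by
    rw [hC]
    calc V * diagonal (fun i => Real.sqrt (d i)) * star V *
          (V * diagonal (fun i => Real.sqrt (d i)) * star V)
        = V * diagonal (fun i => Real.sqrt (d i)) * (star V * V) *
            diagonal (fun i => Real.sqrt (d i)) * star V := by
          simp only [Matrix.mul_assoc]
      _ = V * (diagonal (fun i => Real.sqrt (d i)) * diagonal (fun i => Real.sqrt (d i))) *
            star V := by rw [hV2]; simp only [Matrix.mul_assoc, Matrix.one_mul]
      _ = V * diagonal d * star V := by rw [hDD]
      _ = N := by
          rw [hMN]
          have hdsplit : diagonal d = diagonal (RCLike.ofReal ∘ hM.1.eigenvalues) + ε • 1 := by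
            rw [smul_one_eq_diagonal, diagonal_add]
            exact congrArg _ (funext fun i => by simp [hd])
          rw [hdsplit, Matrix.mul_add, Matrix.add_mul]
          congr 1
          · exact hM.1.spectral_theorem.symm
          · rw [Matrix.mul_smul, Matrix.smul_mul, Matrix.mul_one, hV1]
  have hCsqrt : C = hN.sqrt := hCpsd.eq_sqrt_of_sq_eq hN (by rw [pow_two, hC2])
  rw [← hCsqrt, hC]
  rw [Matrix.trace_mul_comm, ← Matrix.mul_assoc, hV2, Matrix.one_mul, Matrix.trace_diagonal]

end helpers

theorem trace_sqrt_subadditive {n : ℕ} {A B : Matrix (Fin n) (Fin n) ℝ}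
    (hA : A.PosSemidef) (hB : B.PosSemidef) :
    (sqrtM (A + B)).trace ≤ (sqrtM A).trace + (sqrtM B).trace := by
  have hABs : (A + B).PosSemidef := hA.add hB
  unfold sqrtM
  rw [dif_pos hABs, dif_pos hA, dif_pos hB]
  change hABs.sqrt.trace ≤ hA.sqrt.trace + hB.sqrt.trace
  refine le_of_forall_pos_le_add fun δ hδ => ?_
  set c : ℝ := 2 * n + 2 with hc
  have hcpos : (0:ℝ) < c := by positivity
  set r : ℝ := δ / c with hr
  have hrpos : 0 < r := div_pos hδ hcpos
  set ε : ℝ := r ^ 2 with hε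
  have hεpos : 0 < ε := by positivity
  have hsqrtε : Real.sqrt ε = r := Real.sqrt_sq hrpos.le
  have hIpd : (ε • (1 : Matrix (Fin n) (Fin n) ℝ)).PosDef := by
    rw [smul_one_eq_diagonal]
    exact Matrix.PosDef.diagonal fun i => hεpos
  have hA' : (A + ε • 1).PosDef := Matrix.PosDef.posSemidef_add hA hIpd
  have hB' : (B + ε • 1).PosDef := Matrix.PosDef.posSemidef_add hB hIpd
  have hsum : (A + ε • 1 + (B + ε • 1)).PosSemidef := (hA'.add hB').posSemidef
  have hcore := myCore hA' hB' hsum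
  have hEq : A + ε • 1 + (B + ε • 1) = (A + B) + (2 * ε) • (1 : Matrix (Fin n) (Fin n) ℝ) := by
    rw [mul_smul, two_smul]; abel
  have tsum : hsum.sqrt.trace = ∑ i, Real.sqrt (hABs.1.eigenvalues i + 2 * ε) :=
    myTraceSqrtEq hABs hsum (2 * ε) (by positivity) hEq
  have t0 : hABs.sqrt.trace = ∑ i, Real.sqrt (hABs.1.eigenvalues i + 0) :=
    myTraceSqrtEq hABs hABs 0 le_rfl (by simp)
  have tA : hA'.posSemidef.sqrt.trace = ∑ i, Real.sqrt (hA.1.eigenvalues i + ε) :=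
    myTraceSqrtEq hA hA'.posSemidef ε hεpos.le rfl
  have tB : hB'.posSemidef.sqrt.trace = ∑ i, Real.sqrt (hB.1.eigenvalues i + ε) :=
    myTraceSqrtEq hB hB'.posSemidef ε hεpos.le rfl
  have tA0 : hA.sqrt.trace = ∑ i, Real.sqrt (hA.1.eigenvalues i + 0) :=
    myTraceSqrtEq hA hA 0 le_rfl (by simp)
  have tB0 : hB.sqrt.trace = ∑ i, Real.sqrt (hB.1.eigenvalues i + 0) :=
    myTraceSqrtEq hB hB 0 le_rfl (by simp)
  have s1 : hABs.sqrt.trace ≤ hsum.sqrt.trace := by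
    rw [t0, tsum]
    exact Finset.sum_le_sum fun i _ => Real.sqrt_le_sqrt (by linarith)
  have s2 : ∑ i, Real.sqrt (hA.1.eigenvalues i + ε) ≤ hA.sqrt.trace + n * r := by
    rw [tA0]
    calc ∑ i, Real.sqrt (hA.1.eigenvalues i + ε)
        ≤ ∑ i : Fin n, (Real.sqrt (hA.1.eigenvalues i + 0) + r) := by
          refine Finset.sum_le_sum fun i _ => ?_
          rw [add_zero]
          calc Real.sqrt (hA.1.eigenvalues i + ε)
              ≤ Real.sqrt (hA.1.eigenvalues i) + Real.sqrt ε :=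
                mySqrtAddLe (hA.eigenvalues_nonneg i) hεpos.le
            _ = Real.sqrt (hA.1.eigenvalues i) + r := by rw [hsqrtε]
      _ = (∑ i, Real.sqrt (hA.1.eigenvalues i + 0)) + n * r := by
          rw [Finset.sum_add_distrib, Finset.sum_const, Finset.card_univ, Fintype.card_fin,
            nsmul_eq_mul]
  have s3 : ∑ i, Real.sqrt (hB.1.eigenvalues i + ε) ≤ hB.sqrt.trace + n * r := by
    rw [tB0]
    calc ∑ i, Real.sqrt (hB.1.eigenvalues i + ε)
        ≤ ∑ i : Fin n, (Real.sqrt (hB.1.eigenvalues i + 0) + r) := by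
          refine Finset.sum_le_sum fun i _ => ?_
          rw [add_zero]
          calc Real.sqrt (hB.1.eigenvalues i + ε)
              ≤ Real.sqrt (hB.1.eigenvalues i) + Real.sqrt ε :=
                mySqrtAddLe (hB.eigenvalues_nonneg i) hεpos.le
            _ = Real.sqrt (hB.1.eigenvalues i) + r := by rw [hsqrtε]
      _ = (∑ i, Real.sqrt (hB.1.eigenvalues i + 0)) + n * r := by
          rw [Finset.sum_add_distrib, Finset.sum_const, Finset.card_univ, Fintype.card_fin,
            nsmul_eq_mul]
  have h2nr : 2 * (n : ℝ) * r ≤ δ := by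
    rw [hr, ← mul_div_assoc, div_le_iff₀ hcpos, hc]
    nlinarith [hδ.le]
  rw [tA, tB] at hcore
  linarith
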